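/- For every t ∈ Γ and k ∈ B, the starting values of the dynamic program satisfy: g(1,t,k) = f_1(t_m) if (i) k_i = 1 for all i ∈ {1,…,m}, (ii) t_1 ≥ r_1 + p_1, and (iii) t_{i+1} ≥ t_i + p_{i+1} for all i ∈ {1,…,m−1}; otherwise g(1,t,k) = +∞. -/

import Mathlib

/-- A PFB instance has `m+1` machines and `n+1` jobs. `FeasibleUpTo p b r J c` is
feasibility of the schedule `c` for the sub-instance `I_J` containing only the jobs
`0,…,J`: release dates are respected on the first machine, consecutive machines leave
enough processing time, two jobs of `I_J` with different completion times on a machine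
differ by at least its processing time, and at most `b i` jobs of `I_J` complete at
any given time on machine `i`. -/
def FeasibleUpTo {m n : ℕ} (p b : Fin (m + 1) → ℕ) (r : Fin (n + 1) → ℕ)
    (J : Fin (n + 1)) (c : Fin (m + 1) → Fin (n + 1) → ℕ) : Prop :=
  (∀ j ≤ J, r j + p 0 ≤ c 0 j) ∧
  (∀ (i : Fin m), ∀ j ≤ J, c i.castSucc j + p i.succ ≤ c i.succ j) ∧
  (∀ (i : Fin (m + 1)), ∀ j ≤ J, ∀ j' ≤ J,
      c i j ≠ c i j' → c i j + p i ≤ c i j' ∨ c i j' + p i ≤ c i j) ∧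
  (∀ (i : Fin (m + 1)) (t : ℕ),
      (Finset.univ.filter (fun j => j ≤ J ∧ c i j = t)).card ≤ b i)

/-- `Gamma p r i = { r j' + ∑_{i' ≤ i} λ_{i'}·p_{i'} | j' a job, λ_{i'} ∈ {1,…,n+1} }`. -/
def Gamma {m n : ℕ} (p : Fin (m + 1) → ℕ) (r : Fin (n + 1) → ℕ)
    (i : Fin (m + 1)) : Set ℕ :=
  { x | ∃ (j' : Fin (n + 1)) (lam : Fin (m + 1) → ℕ),
      (∀ i' ≤ i, 1 ≤ lam i' ∧ lam i' ≤ n + 1) ∧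
      x = r j' + ∑ i' ∈ Finset.Iic i, lam i' * p i' }

/-- `𝒮(J,t,k)`: feasible schedules for `I_J` that are ordered by the job indices,
correspond to the completion-time vector `t` and batch-size vector `k` (job `J`
completes machine `i` at time `t i` in a batch of exactly `k i` jobs of `I_J`),
and are Γ-active. -/
def SchedSet {m n : ℕ} (p b : Fin (m + 1) → ℕ) (r : Fin (n + 1) → ℕ)
    (J : Fin (n + 1)) (t k : Fin (m + 1) → ℕ) :
    Set (Fin (m + 1) → Fin (n + 1) → ℕ) :=
  { c | FeasibleUpTo p b r J c ∧
      (∀ i : Fin (m + 1), ∀ j ≤ J, ∀ j' ≤ J, j ≤ j' → c i j ≤ c i j') ∧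
      (∀ i : Fin (m + 1), c i J = t i ∧
        (Finset.univ.filter (fun j' => j' ≤ J ∧ c i j' = t i)).card = k i) ∧
      (∀ i : Fin (m + 1), ∀ j ≤ J, c i j ∈ Gamma p r i) }

/-- The objective value `⊕_{j' ≤ J} f_{j'}(C_{j'})` of a schedule for `I_J`, where
`⊕` is the sum if `useSum = true` and the maximum otherwise. -/
noncomputable def obj {m n : ℕ} (useSum : Bool) (f : Fin (n + 1) → ℕ → ℝ)
    (J : Fin (n + 1)) (c : Fin (m + 1) → Fin (n + 1) → ℕ) : ℝ :=
  if useSum then ∑ j ∈ Finset.Iic J, f j (c (Fin.last m) j)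
  else (Finset.Iic J).sup' ⟨J, Finset.mem_Iic.mpr le_rfl⟩
    fun j => f j (c (Fin.last m) j)

/-- The dynamic-programming value `g(J,t,k)`: the minimum (in `ℝ ∪ {+∞} = EReal`,
with `+∞` for an empty set) of the objective over all schedules in `𝒮(J,t,k)`. -/
noncomputable def g {m n : ℕ} (useSum : Bool) (p b : Fin (m + 1) → ℕ)
    (r : Fin (n + 1) → ℕ) (f : Fin (n + 1) → ℕ → ℝ) (J : Fin (n + 1))
    (t k : Fin (m + 1) → ℕ) : EReal :=
  sInf { x : EReal | ∃ c ∈ SchedSet p b r J t k, x = ((obj useSum f J c : ℝ) : EReal) }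


lemma obj_zero {m n : ℕ} (useSum : Bool) (f : Fin (n + 1) → ℕ → ℝ)
    (c : Fin (m + 1) → Fin (n + 1) → ℕ) :
    obj useSum f 0 c = f 0 (c (Fin.last m) 0) := by
  unfold obj
  split
  · rw [show Finset.Iic (0 : Fin (n+1)) = {0} from by
      ext j; simp [Fin.le_zero_iff], Finset.sum_singleton]
  · apply le_antisymm
    · refine Finset.sup'_le _ _ fun j hj => ?_
      have hj0 : j = 0 := Fin.le_zero_iff.mp (Finset.mem_Iic.mp hj)
      subst hj0; exact le_rfl
    · exact Finset.le_sup' (fun j => f j (c (Fin.last m) j)) (Finset.mem_Iic.mpr (Fin.zero_le 0))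

/-- the starting values of the dynamic program. For the first job
(index `0`), `g(0,t,k)` equals `f 0 (t_m)` if (i) all `k i = 1`, (ii)
`t 0 ≥ r 0 + p 0`, and (iii) `t (i+1) ≥ t i + p (i+1)` for consecutive machines;
otherwise it equals `+∞`. -/
theorem stmt6 {m n : ℕ} (useSum : Bool) (p b : Fin (m + 1) → ℕ)
    (r : Fin (n + 1) → ℕ) (hp : ∀ i, 1 ≤ p i) (hb : ∀ i, 1 ≤ b i ∧ b i ≤ n + 1)
    (f : Fin (n + 1) → ℕ → ℝ) (hf : ∀ j, Monotone (f j))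
    (t k : Fin (m + 1) → ℕ)
    (ht : ∀ i, t i ∈ Gamma p r i) (hk : ∀ i, 1 ≤ k i ∧ k i ≤ b i) :
    (((∀ i, k i = 1) ∧ r 0 + p 0 ≤ t 0 ∧
        (∀ i : Fin m, t i.castSucc + p i.succ ≤ t i.succ)) →
      g useSum p b r f 0 t k = ((f 0 (t (Fin.last m)) : ℝ) : EReal)) ∧
    (¬ ((∀ i, k i = 1) ∧ r 0 + p 0 ≤ t 0 ∧
        (∀ i : Fin m, t i.castSucc + p i.succ ≤ t i.succ)) →
      g useSum p b r f 0 t k = ⊤) := by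
  constructor
  · rintro ⟨hk1, h0, hcons⟩
    have hmem : (fun i _ => t i) ∈ SchedSet p b r 0 t k := by
      refine ⟨⟨?_, ?_, ?_, ?_⟩, ?_, ?_, ?_⟩
      · intro j hj
        have : j = 0 := Fin.le_zero_iff.mp hj
        subst this; exact h0
      · intro i j hj
        exact hcons i
      · intro i j hj j' hj' hne
        exact absurd rfl hne
      · intro i s
        calc (Finset.univ.filter (fun j => j ≤ (0 : Fin (n+1)) ∧ t i = s)).card
            ≤ (Finset.univ.filter (fun j => j ≤ (0 : Fin (n+1)))).card := by
              apply Finset.card_le_card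
              intro x hx
              simp only [Finset.mem_filter] at hx ⊢
              exact ⟨hx.1, hx.2.1⟩
          _ ≤ 1 := by
              apply Finset.card_le_one.mpr
              intro a ha b hb
              simp only [Finset.mem_filter, Fin.le_zero_iff] at ha hb
              rw [ha.2, hb.2]
          _ ≤ b i := (hb i).1
      · intro i j hj j' hj' hjj'
        exact le_rfl
      · intro i
        refine ⟨rfl, ?_⟩
        rw [hk1 i]
        rw [show (Finset.univ.filter (fun j' => j' ≤ (0 : Fin (n+1)) ∧ t i = t i)) = {0} from by
          ext j; simp [Fin.le_zero_iff]]
        simp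
      · intro i j hj
        exact ht i
    have hobj : obj useSum f 0 (fun i _ => t i) = f 0 (t (Fin.last m)) := obj_zero _ _ _
    apply le_antisymm
    · exact sInf_le ⟨_, hmem, by rw [hobj]⟩
    · apply le_sInf
      rintro x ⟨c, hc, rfl⟩
      have hlast : c (Fin.last m) 0 = t (Fin.last m) := (hc.2.2.1 (Fin.last m)).1
      rw [obj_zero, hlast]
  · intro hnot
    rw [g]
    refine (congrArg sInf (?_ : _ = (∅ : Set EReal))).trans sInf_empty
    ext x
    simp only [Set.mem_setOf_eq, Set.mem_empty_iff_false, iff_false]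
    rintro ⟨c, hc, rfl⟩
    apply hnot
    obtain ⟨⟨h1, h2, h3, h4⟩, hord, hti, hgam⟩ := hc
    refine ⟨?_, ?_, ?_⟩
    · intro i
      rw [← (hti i).2]
      rw [show (Finset.univ.filter (fun j' => j' ≤ (0 : Fin (n+1)) ∧ c i j' = t i)) = {0} from by
        ext j
        simp only [Finset.mem_filter, Finset.mem_univ, true_and, Finset.mem_singleton,
          Fin.le_zero_iff]
        constructor
        · rintro ⟨h, _⟩; exact h
        · rintro rfl; exact ⟨rfl, (hti i).1⟩]
      simp
    · have := h1 0 le_rfl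
      rwa [(hti 0).1] at this
    · intro i
      have := h2 i 0 le_rfl
      rwa [(hti i.castSucc).1, (hti i.succ).1] at this
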